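/- Let K = (X, (→_a)_{a∈Σ}, ρ) be a Kripke structure over Σ and suppose some world x ∈ X satisfies φ_snake, i.e.: (i) there is y with (x,y) ∈ [[c a₁ b₂ d a₂ b₁ a₂ b₁ c]]; (ii) for every y with (x,y) ∈ [[Σ*{c}]], there exist i ≥ 0 and z with (y,z) ∈ [[(a₁b₂)^i d]], and there is no z with (y,z) ∈ [[L₀]]; (iii) for every y with (x,y) ∈ [[Σ*{d}]], there exist i ≥ 0 and z with (y,z) ∈ [[(a₂b₁)^i c]], and there is no z with (y,z) ∈ [[L₁]]. Then K contains a snake, i.e. there is a function σ: ℕ → X with (σ(p), σ(p+1)) ∈ →_{W(p)} for every p ∈ ℕ, where W is the snake word. -/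

import Mathlib

/-- The six-letter alphabet `Σ = {a₁, a₂, b₁, b₂, c, d}`. -/
inductive Letter where
  | a1 | a2 | b1 | b2 | c | d
deriving DecidableEq

instance instFintypeLetter : Fintype Letter :=
  ⟨{.a1, .a2, .b1, .b2, .c, .d}, by intro x; cases x <;> simp⟩

/-- `w^i`: the `i`-fold concatenation of the word `w`. -/
def wpow (w : List Letter) (i : ℕ) : List Letter :=
  (List.replicate i w).flatten

/-- Given a Kripke structure with transition relations `R a` for each letter `a`, the
relation `[[w]]` of a word `w`: the relational composition of the `R a` along `w`
(the identity for the empty word). -/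
def wordRel {X : Type} (R : Letter → X → X → Prop) : List Letter → X → X → Prop
  | [] => fun x y => x = y
  | a :: w => fun x z => ∃ y, R a x y ∧ wordRel R w y z

/-- `L₀ = {(a₁b₂)^i d (a₂b₁)^j c : i, j ≥ 0, j ≠ i+1}`. -/
def L0 : Set (List Letter) :=
  {w | ∃ i j : ℕ, j ≠ i + 1 ∧
    w = wpow [.a1, .b2] i ++ [.d] ++ wpow [.a2, .b1] j ++ [.c]}

/-- `L₁ = {(a₂b₁)^i c (a₁b₂)^j d : i, j ≥ 0, j ≠ i+1}`. -/
def L1 : Set (List Letter) :=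
  {w | ∃ i j : ℕ, j ≠ i + 1 ∧
    w = wpow [.a2, .b1] i ++ [.c] ++ wpow [.a1, .b2] j ++ [.d]}

/-- The `r`-th block `c (a₁b₂)^{2r+1} d (a₂b₁)^{2r+2}` of the snake word. -/
def snakeBlock (r : ℕ) : List Letter :=
  [.c] ++ wpow [.a1, .b2] (2 * r + 1) ++ [.d] ++ wpow [.a2, .b1] (2 * r + 2)

/-- The `(p+1)`-st letter of the infinite snake word
`W = c (a₁b₂)^1 d (a₂b₁)^2 c (a₁b₂)^3 d (a₂b₁)^4 c ⋯`
(the concatenation of the first `p+1` blocks has length `> p`, so the `getD` default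
is never used). -/
def snakeWord (p : ℕ) : Letter :=
  (((List.range (p + 1)).map snakeBlock).flatten).getD p .c

/-- A snake in a Kripke structure: an infinite path labeled by the snake word `W`. -/
def IsSnake {X : Type} (R : Letter → X → X → Prop) (σ : ℕ → X) : Prop :=
  ∀ p : ℕ, R (snakeWord p) (σ p) (σ (p + 1))

/-- `(K, x) ⊨ φ_snake`:
(i) `⟨c a₁ b₂ d (a₂b₁)² c⟩ true`;
(ii) `[Σ* c](⟨(a₁b₂)* d⟩ true ∧ [L₀] false)`;
(iii) `[Σ* d](⟨(a₂b₁)* c⟩ true ∧ [L₁] false)`. -/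
def PhiSnake {X : Type} (R : Letter → X → X → Prop) (x : X) : Prop :=
  (∃ y, wordRel R [.c, .a1, .b2, .d, .a2, .b1, .a2, .b1, .c] x y) ∧
  (∀ y, (∃ u : List Letter, wordRel R (u ++ [.c]) x y) →
    (∃ i : ℕ, ∃ z, wordRel R (wpow [.a1, .b2] i ++ [.d]) y z) ∧
    ¬ ∃ z, ∃ w ∈ L0, wordRel R w y z) ∧
  (∀ y, (∃ u : List Letter, wordRel R (u ++ [.d]) x y) →
    (∃ i : ℕ, ∃ z, wordRel R (wpow [.a2, .b1] i ++ [.c]) y z) ∧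
    ¬ ∃ z, ∃ w ∈ L1, wordRel R w y z)


namespace SnakeProof

/-- The word `(a₁b₂)^n d (a₂b₁)^{n+1} c`: the segment of the snake word between two
consecutive occurrences of `c` (for `n = 2r+1`). -/
def segword (n : ℕ) : List Letter :=
  wpow [.a1, .b2] n ++ [.d] ++ wpow [.a2, .b1] (n + 1) ++ [.c]

lemma wordRel_append {X : Type} (R : Letter → X → X → Prop) (u v : List Letter)
    (x z : X) : wordRel R (u ++ v) x z ↔ ∃ y, wordRel R u x y ∧ wordRel R v y z := by
  induction u generalizing x with
  | nil => simp [wordRel]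
  | cons a u ih =>
      simp only [List.cons_append, wordRel]
      constructor
      · rintro ⟨y, hy, hrest⟩
        obtain ⟨m, h1, h2⟩ := (ih y).1 hrest
        exact ⟨m, ⟨y, hy, h1⟩, h2⟩
      · rintro ⟨m, ⟨y, hy, h1⟩, h2⟩
        exact ⟨y, hy, (ih y).2 ⟨m, h1, h2⟩⟩

lemma wordRel_comp {X : Type} {R : Letter → X → X → Prop} {u v : List Letter}
    {x y z : X} (h1 : wordRel R u x y) (h2 : wordRel R v y z) :
    wordRel R (u ++ v) x z :=
  (wordRel_append R u v x z).2 ⟨y, h1, h2⟩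

lemma wpow_zero (w : List Letter) : wpow w 0 = [] := rfl

lemma wpow_succ (w : List Letter) (i : ℕ) : wpow w (i + 1) = w ++ wpow w i := by
  simp [wpow, List.replicate_succ]

lemma wpow_len (w : List Letter) (i : ℕ) : (wpow w i).length = i * w.length := by
  induction i with
  | zero => simp [wpow]
  | succ i ih => simp [wpow_succ, ih]; ring

lemma wpow_pair_len (a b : Letter) (i : ℕ) : (wpow [a, b] i).length = 2 * i := by
  rw [wpow_len]; simp [Nat.mul_comm]

lemma segword_len (n : ℕ) : (segword n).length = 4 * n + 4 := by
  simp [segword, wpow_pair_len]; omega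

lemma snakeBlock_len (r : ℕ) : (snakeBlock r).length = 8 * r + 8 := by
  simp [snakeBlock, wpow_pair_len]; omega

lemma flat_len (r : ℕ) :
    (((List.range r).map snakeBlock).flatten).length = 4 * r * (r + 1) := by
  induction r with
  | zero => simp
  | succ r ih =>
      rw [List.range_succ, List.map_append, List.flatten_append, List.length_append,
        ih]
      simp [snakeBlock_len]
      ring

lemma snakeWord_eq (r p : ℕ) (h1 : 4 * r * (r + 1) ≤ p)
    (h2 : p < 4 * (r + 1) * (r + 2)) :
    snakeWord p = (snakeBlock r).getD (p - 4 * r * (r + 1)) .c := by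
  unfold snakeWord
  have hrp : r ≤ p := le_trans (by nlinarith : r ≤ 4 * r * (r + 1)) h1
  obtain ⟨m, hm⟩ : ∃ m, p + 1 = (r + 1) + m := ⟨p - r, by omega⟩
  rw [hm, List.range_add, List.map_append, List.flatten_append,
    List.getD_append _ _ _ _ (by
      rw [flat_len]
      exact h2)]
  rw [List.range_succ, List.map_append, List.flatten_append,
    List.getD_append_right _ _ _ _ (by rw [flat_len]; exact h1)]
  rw [flat_len]
  simp only [List.map_cons, List.map_nil, List.flatten_cons, List.flatten_nil,
    List.append_nil]

lemma snakeWord_seg (r k : ℕ) (hk : k < 8 * r + 8) :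
    snakeWord (1 + 4 * r * (r + 1) + k) = (segword (2 * r + 1)).getD k .c := by
  have hcore :
      (wpow [Letter.a1, Letter.b2] (2 * r + 1) ++ [Letter.d] ++
        wpow [Letter.a2, Letter.b1] (2 * r + 1 + 1)).length = 8 * r + 7 := by
    simp [wpow_pair_len]; omega
  by_cases hk7 : k < 8 * r + 7
  · have h1 : 4 * r * (r + 1) ≤ 1 + 4 * r * (r + 1) + k := by omega
    have h2 : 1 + 4 * r * (r + 1) + k < 4 * (r + 1) * (r + 2) := by nlinarith
    rw [snakeWord_eq r _ h1 h2]
    have hoff : 1 + 4 * r * (r + 1) + k - 4 * r * (r + 1) = k + 1 := by omega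
    rw [hoff]
    show ([Letter.c] ++ wpow [Letter.a1, Letter.b2] (2 * r + 1) ++ [Letter.d] ++
      wpow [Letter.a2, Letter.b1] (2 * r + 2)).getD (k + 1) .c = _
    have hsb : [Letter.c] ++ wpow [Letter.a1, Letter.b2] (2 * r + 1) ++ [Letter.d] ++
        wpow [Letter.a2, Letter.b1] (2 * r + 2) =
        Letter.c :: (wpow [Letter.a1, Letter.b2] (2 * r + 1) ++ [Letter.d] ++
          wpow [Letter.a2, Letter.b1] (2 * r + 1 + 1)) := by
      simp [List.append_assoc]
    rw [hsb, List.getD_cons_succ]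
    unfold segword
    rw [List.getD_append (wpow [Letter.a1, Letter.b2] (2 * r + 1) ++ [Letter.d] ++
        wpow [Letter.a2, Letter.b1] (2 * r + 1 + 1)) [Letter.c] Letter.c k
        (by rw [hcore]; omega)]
  · have hk8 : k = 8 * r + 7 := by omega
    subst hk8
    have hp : 1 + 4 * r * (r + 1) + (8 * r + 7) = 4 * (r + 1) * (r + 1 + 1) := by ring
    rw [hp, snakeWord_eq (r + 1) _ (le_refl _) (by nlinarith)]
    rw [Nat.sub_self]
    have hsb : snakeBlock (r + 1) =
        Letter.c :: (wpow [Letter.a1, Letter.b2] (2 * (r + 1) + 1) ++ [Letter.d] ++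
          wpow [Letter.a2, Letter.b1] (2 * (r + 1) + 2)) := by
      simp [snakeBlock, List.append_assoc]
    rw [hsb, List.getD_cons_zero]
    unfold segword
    rw [List.getD_append_right (wpow [Letter.a1, Letter.b2] (2 * r + 1) ++ [Letter.d] ++
        wpow [Letter.a2, Letter.b1] (2 * r + 1 + 1)) [Letter.c] Letter.c (8 * r + 7)
        (by rw [hcore])]
    rw [hcore]
    simp

/-- Index of the block containing position `q` of the (tail of the) snake word. -/
noncomputable def blockIdx (q : ℕ) : ℕ :=
  Nat.find (⟨q, by nlinarith⟩ : ∃ r, q < 4 * (r + 1) * (r + 2))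

lemma blockIdx_eq (r q : ℕ) (h1 : 4 * r * (r + 1) ≤ q)
    (h2 : q < 4 * (r + 1) * (r + 2)) : blockIdx q = r := by
  have hex : ∃ s, q < 4 * (s + 1) * (s + 2) := ⟨q, by nlinarith⟩
  have hdef : blockIdx q = Nat.find hex := rfl
  rw [hdef, Nat.find_eq_iff hex]
  refine ⟨h2, fun s hs hlt => ?_⟩
  have hmono : 4 * (s + 1) * (s + 2) ≤ 4 * r * (r + 1) := by
    have := Nat.mul_le_mul (Nat.mul_le_mul_left 4 (by omega : s + 1 ≤ r))
      (by omega : s + 2 ≤ r + 1)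
    exact this
  omega

lemma blockIdx_lt (q : ℕ) : q < 4 * (blockIdx q + 1) * (blockIdx q + 2) := by
  have hex : ∃ s, q < 4 * (s + 1) * (s + 2) := ⟨q, by nlinarith⟩
  have hdef : blockIdx q = Nat.find hex := rfl
  rw [hdef]
  exact Nat.find_spec hex

lemma blockIdx_le (q : ℕ) : 4 * blockIdx q * (blockIdx q + 1) ≤ q := by
  rcases Nat.eq_zero_or_pos (blockIdx q) with h0 | hpos
  · rw [h0]; omega
  · have := Nat.find_min (⟨q, by nlinarith⟩ : ∃ r, q < 4 * (r + 1) * (r + 2))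
      (show blockIdx q - 1 < blockIdx q by omega)
    have heq : blockIdx q - 1 + 1 = blockIdx q := by omega
    have heq2 : blockIdx q - 1 + 2 = blockIdx q + 1 := by omega
    rw [heq, heq2] at this
    omega

lemma exists_pathFun {X : Type} (R : Letter → X → X → Prop) :
    ∀ (w : List Letter) (a b : X), wordRel R w a b →
    ∃ f : ℕ → X, f 0 = a ∧ f w.length = b ∧
      ∀ k, k < w.length → R (w.getD k .c) (f k) (f (k + 1)) := by
  intro w
  induction w with
  | nil =>
      intro a b hab
      exact ⟨fun _ => a, rfl, hab, fun k hk => absurd hk (by simp)⟩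
  | cons t w ih =>
      intro a b hab
      obtain ⟨y, hy, hrest⟩ := hab
      obtain ⟨g, hg0, hglen, hgstep⟩ := ih y b hrest
      refine ⟨fun k => if k = 0 then a else g (k - 1), by simp, by simp [hglen], ?_⟩
      intro k hk
      cases k with
      | zero => simpa [hg0] using hy
      | succ j =>
          have : j < w.length := by simpa using hk
          simpa using hgstep j this

lemma exists_chain {α : Type} (Q : ℕ → α → Prop) (P : ℕ → α → α → Prop)
    (y0 : α) (h0 : Q 0 y0)
    (hstep : ∀ n y, Q n y → ∃ y', P n y y' ∧ Q (n + 1) y') :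
    ∃ Y : ℕ → α, Y 0 = y0 ∧ ∀ n, P n (Y n) (Y (n + 1)) := by
  choose f hP hQ using hstep
  let g : ∀ n : ℕ, {y : α // Q n y} := fun n =>
    Nat.rec ⟨y0, h0⟩ (fun n p => ⟨f n p.1 p.2, hQ n p.1 p.2⟩) n
  exact ⟨fun n => (g n).1, rfl, fun n => hP n (g n).1 (g n).2⟩

lemma step_lemma {X : Type} (R : Letter → X → X → Prop) (x : X)
    (h : PhiSnake R x) (n : ℕ) (y : X)
    (hy : ∃ u : List Letter, wordRel R (u ++ [.c]) x y)
    (hp : ∃ z, wordRel R (wpow [.a1, .b2] n ++ [.d]) y z) :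
    ∃ y', wordRel R (segword n) y y' ∧
      (∃ u : List Letter, wordRel R (u ++ [.c]) x y') ∧
      ∃ z, wordRel R (wpow [.a1, .b2] (n + 2) ++ [.d]) y' z := by
  obtain ⟨u, hu⟩ := hy
  obtain ⟨z, hz⟩ := hp
  have hzreach : ∃ u' : List Letter, wordRel R (u' ++ [Letter.d]) x z := by
    refine ⟨u ++ [Letter.c] ++ wpow [.a1, .b2] n, ?_⟩
    have := wordRel_comp hu hz
    simpa [List.append_assoc] using this
  obtain ⟨⟨i, z1, hz1⟩, hnoL1⟩ := h.2.2 z hzreach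
  have hnoL0 := (h.2.1 y ⟨u, hu⟩).2
  have hin : i = n + 1 := by
    by_contra hne
    refine hnoL0 ⟨z1, (wpow [.a1, .b2] n ++ [Letter.d] ++ wpow [.a2, .b1] i ++
      [Letter.c]), ⟨n, i, hne, rfl⟩, ?_⟩
    have := wordRel_comp hz hz1
    simpa [List.append_assoc] using this
  subst hin
  have hyz1 : wordRel R ((wpow [.a1, .b2] n ++ [Letter.d]) ++
      (wpow [.a2, .b1] (n + 1) ++ [Letter.c])) y z1 := wordRel_comp hz hz1
  have hz1reach : ∃ u' : List Letter, wordRel R (u' ++ [Letter.c]) x z1 := by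
    refine ⟨u ++ [Letter.c] ++ (wpow [.a1, .b2] n ++ [Letter.d] ++
      wpow [.a2, .b1] (n + 1)), ?_⟩
    have := wordRel_comp hu hyz1
    simpa [List.append_assoc] using this
  obtain ⟨⟨k, z2, hz2⟩, _⟩ := h.2.1 z1 hz1reach
  have hkn : k = n + 2 := by
    by_contra hne
    refine hnoL1 ⟨z2, (wpow [.a2, .b1] (n + 1) ++ [Letter.c] ++
      wpow [.a1, .b2] k ++ [Letter.d]), ⟨n + 1, k, hne, rfl⟩, ?_⟩
    have := wordRel_comp hz1 hz2
    simpa [List.append_assoc] using this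
  subst hkn
  refine ⟨z1, ?_, hz1reach, z2, hz2⟩
  unfold segword
  simpa [List.append_assoc] using hyz1

end SnakeProof

/-- Every world satisfying `φ_snake` in a Kripke structure `K = (X, (→_a)_{a∈Σ}, ρ)`
is the source of a snake: an infinite path labeled by the snake word `W`. -/
theorem snake_of_phiSnake {X : Type} (R : Letter → X → X → Prop)
    {P : Type} (ρ : X → Set P) (x : X) (h : PhiSnake R x) :
    ∃ σ : ℕ → X, IsSnake R σ := by
  classical
  open SnakeProof in
  -- extract the initial data from clause (i)
  obtain ⟨yend, y0, hc, y1, ha1, y2, hb2, z0, hd, _⟩ := h.1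
  have hQ0 : (∃ u : List Letter, wordRel R (u ++ [.c]) x y0) ∧
      ∃ z, wordRel R (wpow [.a1, .b2] 1 ++ [.d]) y0 z := by
    refine ⟨⟨[], y0, hc, rfl⟩, z0, ?_⟩
    show wordRel R [.a1, .b2, .d] y0 z0
    exact ⟨y1, ha1, y2, hb2, z0, hd, rfl⟩
  -- build the chain of worlds between consecutive `c`s
  obtain ⟨Y, hY0, hYstep⟩ := SnakeProof.exists_chain
    (fun r y => (∃ u : List Letter, wordRel R (u ++ [.c]) x y) ∧
      ∃ z, wordRel R (wpow [.a1, .b2] (2 * r + 1) ++ [.d]) y z)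
    (fun r y y' => wordRel R (SnakeProof.segword (2 * r + 1)) y y')
    y0 hQ0
    (fun r y hq => by
      obtain ⟨y', hseg, hreach, z, hz⟩ :=
        SnakeProof.step_lemma R x h (2 * r + 1) y hq.1 hq.2
      exact ⟨y', hseg, hreach, z, by
        have he : 2 * r + 1 + 2 = 2 * (r + 1) + 1 := by omega
        rwa [he] at hz⟩)
  -- extract pointwise path functions for each segment
  have hpaths := fun r => SnakeProof.exists_pathFun R _ _ _ (hYstep r)
  choose f hf0 hflen hfstep using hpaths
  have hlen : ∀ r, (SnakeProof.segword (2 * r + 1)).length = 8 * r + 8 := by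
    intro r; rw [SnakeProof.segword_len]; omega
  -- the snake
  refine ⟨fun p => if p = 0 then x else
    f (SnakeProof.blockIdx (p - 1))
      (p - 1 - 4 * SnakeProof.blockIdx (p - 1) * (SnakeProof.blockIdx (p - 1) + 1)),
    fun p => ?_⟩
  cases p with
  | zero =>
      dsimp only
      simp only [if_pos rfl, if_neg (one_ne_zero)]
      have hb0 : SnakeProof.blockIdx 0 = 0 :=
        SnakeProof.blockIdx_eq 0 0 (by omega) (by omega)
      have hsw0 : snakeWord 0 = Letter.c := rfl
      rw [hsw0]
      simp only [Nat.sub_self, hb0]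
      simpa [hf0, hY0] using hc
  | succ q =>
      dsimp only
      set r := SnakeProof.blockIdx q with hr
      have hq1 : 4 * r * (r + 1) ≤ q := SnakeProof.blockIdx_le q
      have hq2 : q < 4 * (r + 1) * (r + 2) := SnakeProof.blockIdx_lt q
      have hrel : 4 * (r + 1) * (r + 2) = 4 * r * (r + 1) + (8 * r + 8) := by ring
      set s := 4 * r * (r + 1) with hs
      set k := q - s with hkdef
      have hk : k < 8 * r + 8 := by omega
      have hqk : q = s + k := by omega
      have hσ1 : (if q + 1 = 0 then x else
          f (SnakeProof.blockIdx (q + 1 - 1))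
            (q + 1 - 1 - 4 * SnakeProof.blockIdx (q + 1 - 1) *
              (SnakeProof.blockIdx (q + 1 - 1) + 1))) = f r k := by
        simp only [if_neg (Nat.succ_ne_zero q), Nat.add_sub_cancel, ← hr, ← hs, ← hkdef]
      have hsw : snakeWord (q + 1) = (SnakeProof.segword (2 * r + 1)).getD k .c := by
        have : q + 1 = 1 + 4 * r * (r + 1) + k := by omega
        rw [this]
        exact SnakeProof.snakeWord_seg r k hk
      by_cases hklast : k + 1 < 8 * r + 8
      · -- stay within segment r
        have hb : SnakeProof.blockIdx (q + 1) = r :=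
          SnakeProof.blockIdx_eq r (q + 1) (by omega) (by omega)
        have hσ2 : (if q + 1 + 1 = 0 then x else
            f (SnakeProof.blockIdx (q + 1 + 1 - 1))
              (q + 1 + 1 - 1 - 4 * SnakeProof.blockIdx (q + 1 + 1 - 1) *
                (SnakeProof.blockIdx (q + 1 + 1 - 1) + 1))) = f r (k + 1) := by
          simp only [if_neg (Nat.succ_ne_zero (q + 1)), Nat.add_sub_cancel, hb]
          congr 1
          omega
        rw [hσ1, hσ2, hsw]
        exact hfstep r k (by rw [hlen]; omega)
      · -- cross into segment r + 1
        have hk8 : k = 8 * r + 7 := by omega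
        have hq1next : q + 1 = 4 * (r + 1) * (r + 1 + 1) := by
          have : 4 * (r + 1) * (r + 1 + 1) = s + (8 * r + 8) := by rw [hs]; ring
          omega
        have hb : SnakeProof.blockIdx (q + 1) = r + 1 :=
          SnakeProof.blockIdx_eq (r + 1) (q + 1) (by omega)
            (by nlinarith)
        have hσ2 : (if q + 1 + 1 = 0 then x else
            f (SnakeProof.blockIdx (q + 1 + 1 - 1))
              (q + 1 + 1 - 1 - 4 * SnakeProof.blockIdx (q + 1 + 1 - 1) *
                (SnakeProof.blockIdx (q + 1 + 1 - 1) + 1))) = f (r + 1) 0 := by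
          simp only [if_neg (Nat.succ_ne_zero (q + 1)), Nat.add_sub_cancel, hb]
          congr 1
          omega
        have hglue : f (r + 1) 0 = f r (8 * r + 8) := by
          rw [hf0, ← hlen r, hflen]
        rw [hσ1, hσ2, hsw, hglue, hk8]
        exact hfstep r (8 * r + 7) (by rw [hlen]; omega)
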